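/- For every odd n ≥ 3, the hom-poset 𝓗(C_n) with the involution ν(A,B) = (B,A) is a Z₂-poset, and there is an order-isomorphism from 𝓗(C_n) to the Z₂-crown of order n that commutes with the involutions. -/

import Mathlib

/-! ### The poset `Q₁` (face poset of the 1-dimensional cross-polytope) -/

/-- The four elements `+0, -0, +1, -1` of `Q₁`. -/
inductive Q1 : Type
  | p0 | m0 | p1 | m1
deriving DecidableEq

instance instFintypeQ1 : Fintype Q1 :=
  ⟨{.p0, .m0, .p1, .m1}, fun x => by cases x <;> decide⟩

/-- The level (`false` for `±0`, `true` for `±1`) of an element of `Q₁`. -/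
def Q1.lvl : Q1 → Bool
  | .p0 => false | .m0 => false | .p1 => true | .m1 => true

/-- The order on `Q₁`: `±0 < ±1` (all four strict relations). -/
instance : PartialOrder Q1 where
  le x y := x = y ∨ (x.lvl = false ∧ y.lvl = true)
  le_refl x := Or.inl rfl
  le_trans x y z hxy hyz := by
    rcases hxy with rfl | ⟨h1, h2⟩
    · exact hyz
    rcases hyz with rfl | ⟨h3, h4⟩
    · exact Or.inr ⟨h1, h2⟩
    · rw [h2] at h3; exact absurd h3 (by simp)
  le_antisymm x y hxy hyx := by
    rcases hxy with rfl | ⟨h1, h2⟩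
    · rfl
    rcases hyx with rfl | ⟨h3, h4⟩
    · rfl
    · rw [h2] at h3; exact absurd h3 (by simp)

/-- The involution of `Q₁`, swapping `+x` and `-x`. -/
def q1inv : Q1 → Q1
  | .p0 => .m0 | .m0 => .p0 | .p1 => .m1 | .m1 => .p1

/-! ### The `Z₂`-crown of order `n` -/

/-- The `Z₂`-crown of order `n` has element set `ZMod (4n)`. -/
abbrev Crown (n : ℕ) : Type := ZMod (4 * n)

instance (n : ℕ) [NeZero n] : NeZero (4 * n) := ⟨by have := NeZero.ne n; omega⟩

private lemma crown_parity {n : ℕ} [NeZero n] (x : ZMod (4 * n)) :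
    (x + 1).val % 2 = (x.val + 1) % 2 := by
  haveI : Fact (1 < 4 * n) := ⟨by have := NeZero.ne n; omega⟩
  rw [ZMod.val_add, ZMod.val_one, Nat.mod_mod_of_dvd _ ⟨2 * n, by ring⟩]

/-- The order on the crown, generated by `e < e + 1` and `e < e - 1` for even `e`. -/
instance crownPO (n : ℕ) [NeZero n] : PartialOrder (Crown n) where
  le x y := x = y ∨ (Even x.val ∧ (y = x + 1 ∨ y = x - 1))
  le_refl x := Or.inl rfl
  le_trans x y z hxy hyz := by
    rcases hxy with rfl | ⟨hex, hy⟩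
    · exact hyz
    rcases hyz with rfl | ⟨hey, hz⟩
    · exact Or.inr ⟨hex, hy⟩
    · exfalso
      rcases hy with rfl | rfl
      · have h := crown_parity x
        rw [Nat.even_iff] at hex hey; omega
      · have e : x - 1 + 1 = x := by ring
        have h := crown_parity (x - 1)
        rw [e] at h
        rw [Nat.even_iff] at hex hey; omega
  le_antisymm x y hxy hyx := by
    rcases hxy with rfl | ⟨hex, hy⟩
    · rfl
    rcases hyx with rfl | ⟨hey, hx⟩
    · rfl
    · exfalso
      rcases hy with rfl | rfl
      · have h := crown_parity x
        rw [Nat.even_iff] at hex hey; omega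
      · have e : x - 1 + 1 = x := by ring
        have h := crown_parity (x - 1)
        rw [e] at h
        rw [Nat.even_iff] at hex hey; omega

/-! ### The vector space `ZMod2^{P²}` with its strict order indicator -/

/-- Ordered pairs `(x,y)` with `x ≤ y` of a poset: the basis of `ZMod2^{P²}`. -/
abbrev OPairs (P : Type) [PartialOrder P] : Type := {p : P × P // p.1 ≤ p.2}

/-- The `ZMod 2`-vector space with basis the ordered pairs of `P`. -/
abbrev VS (P : Type) [PartialOrder P] := OPairs P →₀ ZMod 2

open scoped Classical in
/-- The strict order indicator: the sum of the basis elements `(x,y)` with `x < y`. -/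
noncomputable def soi (P : Type) [PartialOrder P] [Finite P] : VS P :=
  letI : Fintype (OPairs P) := Fintype.ofFinite _
  ∑ p : OPairs P, if p.val.1 < p.val.2 then Finsupp.single p 1 else 0

open scoped Classical in
/-- The sum of the basis elements `(x,y)` with `x < y` and `x, y ∈ S`. -/
noncomputable def soiOn {P : Type} [PartialOrder P] [Finite P] (S : Set P) : VS P :=
  letI : Fintype (OPairs P) := Fintype.ofFinite _
  ∑ p : OPairs P,
    if p.val.1 ∈ S ∧ p.val.2 ∈ S ∧ p.val.1 < p.val.2 then Finsupp.single p 1 else 0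

/-- The linear map `f̂` induced by a monotone map, sending the basis element `(x,y)`
to `(f x, f y)`. -/
noncomputable def fhat {P Q : Type} [PartialOrder P] [PartialOrder Q] {f : P → Q}
    (hf : Monotone f) : VS P →ₗ[ZMod 2] VS Q :=
  Finsupp.lmapDomain (ZMod 2) (ZMod 2) (fun p => ⟨(f p.val.1, f p.val.2), hf p.prop⟩)

/-- The cycle graph on `ZMod n` (`i` adjacent to `i ± 1`). -/
def cyc (n : ℕ) : SimpleGraph (ZMod n) := SimpleGraph.fromRel (fun i j => j = i + 1)
/-- The hom-poset `𝓗(H)`: pairs `(A,B)` of nonempty sets of vertices with every vertex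
of `A` adjacent to every vertex of `B`, ordered by coordinatewise inclusion. -/
def HomPt {V : Type} (H : SimpleGraph V) : Type :=
  {AB : Set V × Set V // AB.1.Nonempty ∧ AB.2.Nonempty ∧ ∀ a ∈ AB.1, ∀ b ∈ AB.2, H.Adj a b}

instance {V : Type} (H : SimpleGraph V) : PartialOrder (HomPt H) :=
  inferInstanceAs (PartialOrder
    {AB : Set V × Set V // AB.1.Nonempty ∧ AB.2.Nonempty ∧ ∀ a ∈ AB.1, ∀ b ∈ AB.2, H.Adj a b})

instance {V : Type} [Finite V] (H : SimpleGraph V) : Finite (HomPt H) :=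
  inferInstanceAs (Finite
    {AB : Set V × Set V // AB.1.Nonempty ∧ AB.2.Nonempty ∧ ∀ a ∈ AB.1, ∀ b ∈ AB.2, H.Adj a b})

/-- The eight-element subposet `ρ⁺` of `𝓗(H)` associated to a 4-cycle `(a,b,c,d)`. -/
def rhoP {V : Type} (H : SimpleGraph V) (a b c d : V) : Set (HomPt H) :=
  {X | X.val = ({a}, H.neighborSet a) ∨ X.val = (H.neighborSet b, {b}) ∨
       X.val = ({c}, H.neighborSet c) ∨ X.val = (H.neighborSet d, {d}) ∨
       X.val = ({a}, {b}) ∨ X.val = ({c}, {b}) ∨ X.val = ({c}, {d}) ∨ X.val = ({a}, {d})}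

/-- The thirteen-element subposet `D(ρ⁺)` of `𝓗(H)`, obtained from `ρ⁺` by adding five
further elements. -/
def DrhoP {V : Type} (H : SimpleGraph V) (a b c d : V) : Set (HomPt H) :=
  rhoP H a b c d ∪
    {X | X.val = ({a}, {b, d}) ∨ X.val = ({a, c}, {b}) ∨ X.val = ({c}, {b, d}) ∨
         X.val = ({a, c}, {d}) ∨ X.val = (({a, c} : Set V), ({b, d} : Set V))}

/-- The involution `ν(A,B) = (B,A)` of the hom-poset. -/
def nuH {V : Type} (H : SimpleGraph V) (X : HomPt H) : HomPt H :=
  ⟨(X.val.2, X.val.1), X.prop.2.1, X.prop.1, fun b hb a ha => (X.prop.2.2 a ha b hb).symm⟩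

namespace CrownIsoAux

variable {n : ℕ}

lemma one_ne (h3 : 3 ≤ n) : (1 : ZMod n) ≠ 0 := by
  intro h
  rw [show ((1:ZMod n)) = ((1:ℕ):ZMod n) by norm_cast, ZMod.natCast_eq_zero_iff] at h
  have := Nat.le_of_dvd (by norm_num) h
  omega

lemma two_ne (h3 : 3 ≤ n) : (2 : ZMod n) ≠ 0 := by
  intro h
  rw [show ((2:ZMod n)) = ((2:ℕ):ZMod n) by norm_cast, ZMod.natCast_eq_zero_iff] at h
  have := Nat.le_of_dvd (by norm_num) h
  omega

lemma four_ne (hodd : Odd n) (h3 : 3 ≤ n) : (4 : ZMod n) ≠ 0 := by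
  intro h
  rw [show ((4:ZMod n)) = ((4:ℕ):ZMod n) by norm_cast, ZMod.natCast_eq_zero_iff] at h
  have h4 := Nat.le_of_dvd (by norm_num) h
  interval_cases n
  · norm_num at h
  · exact (by decide : ¬ Odd 4) hodd

lemma cyc_adj' (h3 : 3 ≤ n) {a b : ZMod n} :
    (cyc n).Adj a b ↔ b = a + 1 ∨ b = a - 1 := by
  have h1 : (1 : ZMod n) ≠ 0 := one_ne h3
  rw [cyc, SimpleGraph.fromRel_adj]
  constructor
  · rintro ⟨hne, (rfl | h)⟩
    · exact Or.inl rfl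
    · right; rw [h]; ring
  · rintro (rfl | rfl)
    · exact ⟨fun hh => h1 (by linear_combination -hh), Or.inl rfl⟩
    · exact ⟨fun hh => h1 (by linear_combination hh), Or.inr (by ring)⟩

lemma common (hodd : Odd n) (h3 : 3 ≤ n) {a a' b b' : ZMod n} (hne : a ≠ a')
    (h1 : (cyc n).Adj a b) (h2 : (cyc n).Adj a' b)
    (h1' : (cyc n).Adj a b') (h2' : (cyc n).Adj a' b') : b = b' := by
  have h4z := four_ne hodd h3
  rw [cyc_adj' h3] at h1 h2 h1' h2'
  rcases h1 with rfl | rfl <;> rcases h1' with rfl | rfl <;>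
    rcases h2 with h2 | h2 <;> rcases h2' with h2' | h2' <;>
      first
        | rfl
        | exact absurd (show a = a' by linear_combination h2) hne
        | exact absurd (show a = a' by linear_combination h2') hne
        | exact absurd (show (4:ZMod n) = 0 by linear_combination h2 - h2') h4z
        | exact absurd (show (4:ZMod n) = 0 by linear_combination h2' - h2) h4z

lemma subset_pair {α : Type} {S : Set α} {x y : α} (hS : S.Nonempty)
    (h : S ⊆ ({x, y} : Set α)) : S = {x} ∨ S = {y} ∨ S = {x, y} := by
  by_cases hx : x ∈ S
  · by_cases hy : y ∈ S
    · right; right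
      refine Set.Subset.antisymm h ?_
      rintro z (rfl | rfl)
      exacts [hx, hy]
    · left
      refine Set.Subset.antisymm ?_ (by simpa using hx)
      intro z hz
      rcases h hz with rfl | hz'
      · rfl
      · rw [Set.mem_singleton_iff] at hz'; subst hz'; exact absurd hz hy
  · by_cases hy : y ∈ S
    · right; left
      refine Set.Subset.antisymm ?_ (by simpa using hy)
      intro z hz
      rcases h hz with rfl | hz'
      · exact absurd hz hx
      · exact hz'
    · obtain ⟨z, hz⟩ := hS
      rcases h hz with rfl | hz'
      · exact absurd hz hx
      · rw [Set.mem_singleton_iff] at hz'; subst hz'; exact absurd hz hy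

lemma eq_pair {α : Type} {S : Set α} {x y u v : α} (h : S ⊆ ({x, y} : Set α))
    (hu : u ∈ S) (hv : v ∈ S) (huv : u ≠ v) : S = {x, y} := by
  rcases subset_pair ⟨u, hu⟩ h with h' | h' | h'
  · rw [h'] at hu hv
    rw [Set.mem_singleton_iff] at hu hv
    exact absurd (hu.trans hv.symm) huv
  · rw [h'] at hu hv
    rw [Set.mem_singleton_iff] at hu hv
    exact absurd (hu.trans hv.symm) huv
  · exact h'

lemma classify (hodd : Odd n) (h3 : 3 ≤ n) (X : HomPt (cyc n)) :
    (∃ a : ZMod n, X.val = ({a}, {a + 1})) ∨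
    (∃ a : ZMod n, X.val = ({a + 1}, {a})) ∨
    (∃ a : ZMod n, X.val = ({a, a + 2}, {a + 1})) ∨
    (∃ a : ZMod n, X.val = ({a + 1}, ({a, a + 2} : Set (ZMod n)))) := by
  obtain ⟨⟨A, B⟩, hA, hB, hadj⟩ := X
  dsimp only at hA hB hadj ⊢
  obtain ⟨a, ha⟩ := hA
  obtain ⟨b, hb⟩ := hB
  by_cases hone : ∀ a' ∈ A, a' = a
  · have hAeq : A = {a} := by
      ext z; rw [Set.mem_singleton_iff]
      exact ⟨fun h => hone z h, fun h => h ▸ ha⟩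
    have hBsub : B ⊆ {a + 1, a - 1} := by
      intro b' hb'
      rcases (cyc_adj' h3).mp (hadj a ha b' hb') with h | h
      · rw [h]; exact Set.mem_insert _ _
      · rw [h]; exact Set.mem_insert_of_mem _ rfl
    rcases subset_pair ⟨b, hb⟩ hBsub with h' | h' | h'
    · exact Or.inl ⟨a, by rw [hAeq, h']⟩
    · right; left
      refine ⟨a - 1, ?_⟩
      rw [hAeq, h']
      have e : a - 1 + 1 = a := by ring
      rw [e]
    · right; right; right
      refine ⟨a - 1, ?_⟩
      rw [hAeq, h']
      have e : a - 1 + 1 = a := by ring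
      have e2 : a - 1 + 2 = a + 1 := by ring
      rw [e, e2, Set.pair_comm (a+1) (a-1)]
  · push_neg at hone
    obtain ⟨a', ha', hne⟩ := hone
    have hBsing : B = {b} := by
      ext z; rw [Set.mem_singleton_iff]
      refine ⟨fun hz => ?_, fun hz => hz ▸ hb⟩
      exact common hodd h3 hne (hadj a' ha' z hz) (hadj a ha z hz)
        (hadj a' ha' b hb) (hadj a ha b hb)
    have hAsub : A ⊆ {b + 1, b - 1} := by
      intro a0 h0
      rcases (cyc_adj' h3).mp (hadj a0 h0 b hb) with h | h
      · have : a0 = b - 1 := by rw [h]; ring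
        rw [this]; exact Set.mem_insert_of_mem _ rfl
      · have : a0 = b + 1 := by rw [h]; ring
        rw [this]; exact Set.mem_insert _ _
    have hAeq : A = {b + 1, b - 1} := eq_pair hAsub ha' ha hne
    right; right; left
    refine ⟨b - 1, ?_⟩
    rw [hAeq, hBsing]
    have e : b - 1 + 1 = b := by ring
    have e2 : b - 1 + 2 = b + 1 := by ring
    rw [e, e2, Set.pair_comm (b+1) (b-1)]

end CrownIsoAux
namespace CrownIsoAux

variable {n : ℕ}

lemma cancel_two (hodd : Odd n) {a b : ℕ} (h : 2 * a ≡ 2 * b [MOD n]) : a ≡ b [MOD n] :=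
  Nat.ModEq.cancel_left_of_coprime (by simpa using hodd.coprime_two_right) h

lemma pipe (hodd : Odd n) {a b : ℕ}
    (h : ((2 * a : ℕ) : ZMod n) = ((2 * b : ℕ) : ZMod n)) :
    4 * a ≡ 4 * b [MOD 4 * n] :=
  (cancel_two hodd ((ZMod.natCast_eq_natCast_iff _ _ _).mp h)).mul_left' 4

lemma zmod_eq_of_modEq {m : ℕ} [NeZero m] {x : ZMod m} {t : ℕ}
    (h : x.val ≡ t [MOD m]) : x = (t : ZMod m) := by
  conv_lhs => rw [← ZMod.natCast_zmod_val x]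
  exact (ZMod.natCast_eq_natCast_iff _ _ _).mpr h

lemma crown_eqq {m : ℕ} [NeZero m] {x y : ZMod m} (h : x.val ≡ y.val [MOD m]) : x = y := by
  rw [zmod_eq_of_modEq h, ZMod.natCast_zmod_val]

lemma crown_succ {m : ℕ} [NeZero m] {x y : ZMod m}
    (h : y.val ≡ x.val + 1 [MOD m]) : y = x + 1 := by
  rw [zmod_eq_of_modEq h]
  push_cast
  rw [ZMod.natCast_zmod_val]

lemma crown_pred {m : ℕ} [NeZero m] {x y : ZMod m}
    (h : y.val + 1 ≡ x.val [MOD m]) : y = x - 1 := by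
  have hx : x = ((y.val + 1 : ℕ) : ZMod m) := zmod_eq_of_modEq h.symm
  rw [hx]
  push_cast
  rw [ZMod.natCast_zmod_val]
  ring

/-- The underlying pair of sets of the map from the crown to the hom-poset. -/
def gpair (n : ℕ) (v : ℕ) : Set (ZMod n) × Set (ZMod n) :=
  match v % 4 with
  | 0 => ({((v / 2 : ℕ) : ZMod n)}, {((v / 2 : ℕ) : ZMod n) + 1})
  | 1 => ({((v / 2 : ℕ) : ZMod n), ((v / 2 : ℕ) : ZMod n) + 2}, {((v / 2 : ℕ) : ZMod n) + 1})
  | 2 => ({((v / 2 : ℕ) : ZMod n) + 1}, {((v / 2 : ℕ) : ZMod n)})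
  | _ => ({((v / 2 : ℕ) : ZMod n) + 1}, {((v / 2 : ℕ) : ZMod n), ((v / 2 : ℕ) : ZMod n) + 2})

lemma gpair_eq0 {v : ℕ} (h : v % 4 = 0) :
    gpair n v = ({((v / 2 : ℕ) : ZMod n)}, {((v / 2 : ℕ) : ZMod n) + 1}) := by
  unfold gpair; rw [h]; rfl

lemma gpair_eq1 {v : ℕ} (h : v % 4 = 1) :
    gpair n v = ({((v / 2 : ℕ) : ZMod n), ((v / 2 : ℕ) : ZMod n) + 2},
      {((v / 2 : ℕ) : ZMod n) + 1}) := by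
  unfold gpair; rw [h]; rfl

lemma gpair_eq2 {v : ℕ} (h : v % 4 = 2) :
    gpair n v = ({((v / 2 : ℕ) : ZMod n) + 1}, {((v / 2 : ℕ) : ZMod n)}) := by
  unfold gpair; rw [h]; rfl

lemma gpair_eq3 {v : ℕ} (h : v % 4 = 3) :
    gpair n v = ({((v / 2 : ℕ) : ZMod n) + 1},
      {((v / 2 : ℕ) : ZMod n), ((v / 2 : ℕ) : ZMod n) + 2}) := by
  unfold gpair; rw [h]; rfl

lemma gpair_mem (h3 : 3 ≤ n) (v : ℕ) :
    (gpair n v).1.Nonempty ∧ (gpair n v).2.Nonempty ∧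
      ∀ a ∈ (gpair n v).1, ∀ b ∈ (gpair n v).2, (cyc n).Adj a b := by
  set c : ZMod n := ((v / 2 : ℕ) : ZMod n) with hc
  have adj1 : (cyc n).Adj c (c + 1) := (cyc_adj' h3).mpr (Or.inl rfl)
  have adj2 : (cyc n).Adj (c + 2) (c + 1) := (cyc_adj' h3).mpr (Or.inr (by ring))
  have adj3 : (cyc n).Adj (c + 1) c := (cyc_adj' h3).mpr (Or.inr (by ring))
  have adj4 : (cyc n).Adj (c + 1) (c + 2) := (cyc_adj' h3).mpr (Or.inl (by ring))
  have h4 : v % 4 = 0 ∨ v % 4 = 1 ∨ v % 4 = 2 ∨ v % 4 = 3 := by omega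
  rcases h4 with h | h | h | h
  · rw [gpair_eq0 h]
    refine ⟨⟨_, rfl⟩, ⟨_, rfl⟩, ?_⟩
    rintro x (rfl) y (rfl)
    exact adj1
  · rw [gpair_eq1 h]
    refine ⟨⟨c, Set.mem_insert _ _⟩, ⟨_, rfl⟩, ?_⟩
    rintro x (rfl | hx) y (rfl)
    · exact adj1
    · rw [Set.mem_singleton_iff] at hx; subst hx; exact adj2
  · rw [gpair_eq2 h]
    refine ⟨⟨_, rfl⟩, ⟨_, rfl⟩, ?_⟩
    rintro x (rfl) y (rfl)
    exact adj3
  · rw [gpair_eq3 h]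
    refine ⟨⟨_, rfl⟩, ⟨c, Set.mem_insert _ _⟩, ?_⟩
    rintro x (rfl) y (rfl | hy)
    · exact adj3
    · rw [Set.mem_singleton_iff] at hy; subst hy; exact adj4

/-- The map from the crown to the hom-poset. -/
def g [NeZero n] (h3 : 3 ≤ n) (x : Crown n) : HomPt (cyc n) :=
  ⟨gpair n x.val, gpair_mem h3 _⟩

lemma homPt_le_iff {V : Type} (H : SimpleGraph V) (X Y : HomPt H) :
    X ≤ Y ↔ X.val.1 ⊆ Y.val.1 ∧ X.val.2 ⊆ Y.val.2 := Iff.rfl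

lemma crown_le_iff [NeZero n] (x y : Crown n) :
    x ≤ y ↔ (x = y ∨ (Even x.val ∧ (y = x + 1 ∨ y = x - 1))) := Iff.rfl

end CrownIsoAux
namespace CrownIsoAux

variable {n : ℕ}

lemma pipe' (hodd : Odd n) {a b : ℕ}
    (h : ((2 * a + 1 : ℕ) : ZMod n) = ((2 * b + 1 : ℕ) : ZMod n)) :
    4 * a ≡ 4 * b [MOD 4 * n] := by
  have h' := (ZMod.natCast_eq_natCast_iff _ _ _).mp h
  exact (cancel_two hodd (Nat.ModEq.add_right_cancel' 1 h')).mul_left' 4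

lemma modeq_eq_of_lt {m a b : ℕ} (h : a ≡ b [MOD m]) (ha : a < m) (hb : b < m) : a = b := by
  rwa [Nat.ModEq, Nat.mod_eq_of_lt ha, Nat.mod_eq_of_lt hb] at h

lemma gpair_le_modEq [NeZero n] (hodd : Odd n) (h3 : 3 ≤ n) {v w : ℕ}
    (hv : v < 4 * n) (hw : w < 4 * n)
    (hA : (gpair n v).1 ⊆ (gpair n w).1) (hB : (gpair n v).2 ⊆ (gpair n w).2) :
    v = w ∨ (v % 2 = 0 ∧ (w ≡ v + 1 [MOD 4 * n] ∨ w + 1 ≡ v [MOD 4 * n])) := by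
  have h2z := two_ne (n := n) h3
  have hv4 : v % 4 = 0 ∨ v % 4 = 1 ∨ v % 4 = 2 ∨ v % 4 = 3 := by omega
  have hw4 : w % 4 = 0 ∨ w % 4 = 1 ∨ w % 4 = 2 ∨ w % 4 = 3 := by omega
  rcases hv4 with hv4 | hv4 | hv4 | hv4 <;> rcases hw4 with hw4 | hw4 | hw4 | hw4
  -- case (0, *)
  · obtain ⟨a, rfl⟩ : ∃ a, v = 4 * a + 0 := ⟨v / 4, by omega⟩
    obtain ⟨b, rfl⟩ : ∃ b, w = 4 * b + 0 := ⟨w / 4, by omega⟩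
    rw [gpair_eq0 (by omega), gpair_eq0 (by omega),
      show (4 * a + 0) / 2 = 2 * a by omega, show (4 * b + 0) / 2 = 2 * b by omega] at hA hB
    simp only [Set.singleton_subset_iff, Set.insert_subset_iff, Set.mem_insert_iff,
      Set.mem_singleton_iff] at hA hB
    exact Or.inl (modeq_eq_of_lt ((pipe hodd hA).add_right 0) hv hw)
  · obtain ⟨a, rfl⟩ : ∃ a, v = 4 * a + 0 := ⟨v / 4, by omega⟩
    obtain ⟨b, rfl⟩ : ∃ b, w = 4 * b + 1 := ⟨w / 4, by omega⟩
    rw [gpair_eq0 (by omega), gpair_eq1 (by omega),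
      show (4 * a + 0) / 2 = 2 * a by omega, show (4 * b + 1) / 2 = 2 * b by omega] at hA hB
    simp only [Set.singleton_subset_iff, Set.insert_subset_iff, Set.mem_insert_iff,
      Set.mem_singleton_iff] at hA hB
    have h' : ((2 * a : ℕ) : ZMod n) = ((2 * b : ℕ) : ZMod n) := by
      push_cast at hB ⊢; linear_combination hB
    exact Or.inr ⟨by omega, Or.inl ((pipe hodd h').add_right 1).symm⟩
  · obtain ⟨a, rfl⟩ : ∃ a, v = 4 * a + 0 := ⟨v / 4, by omega⟩
    obtain ⟨b, rfl⟩ : ∃ b, w = 4 * b + 2 := ⟨w / 4, by omega⟩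
    rw [gpair_eq0 (by omega), gpair_eq2 (by omega),
      show (4 * a + 0) / 2 = 2 * a by omega, show (4 * b + 2) / 2 = 2 * b + 1 by omega] at hA hB
    simp only [Set.singleton_subset_iff, Set.insert_subset_iff, Set.mem_insert_iff,
      Set.mem_singleton_iff] at hA hB
    exact absurd (show (2 : ZMod n) = 0 by push_cast at hA hB; linear_combination hB - hA) h2z
  · obtain ⟨a, rfl⟩ : ∃ a, v = 4 * a + 0 := ⟨v / 4, by omega⟩
    obtain ⟨b, rfl⟩ : ∃ b, w = 4 * b + 3 := ⟨w / 4, by omega⟩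
    rw [gpair_eq0 (by omega), gpair_eq3 (by omega),
      show (4 * a + 0) / 2 = 2 * a by omega, show (4 * b + 3) / 2 = 2 * b + 1 by omega] at hA hB
    simp only [Set.singleton_subset_iff, Set.insert_subset_iff, Set.mem_insert_iff,
      Set.mem_singleton_iff] at hA hB
    rcases hB with hB | hB
    · exact absurd (show (2 : ZMod n) = 0 by push_cast at hA hB; linear_combination hB - hA) h2z
    · have h' : ((2 * a : ℕ) : ZMod n) = ((2 * (b + 1) : ℕ) : ZMod n) := by
        push_cast at hA ⊢; linear_combination hA
      refine Or.inr ⟨by omega, Or.inr ?_⟩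
      have e : 4 * b + 3 + 1 = 4 * (b + 1) := by ring
      rw [e]
      exact (pipe hodd h').symm
  -- case (1, *)
  · obtain ⟨a, rfl⟩ : ∃ a, v = 4 * a + 1 := ⟨v / 4, by omega⟩
    obtain ⟨b, rfl⟩ : ∃ b, w = 4 * b + 0 := ⟨w / 4, by omega⟩
    rw [gpair_eq1 (by omega), gpair_eq0 (by omega),
      show (4 * a + 1) / 2 = 2 * a by omega, show (4 * b + 0) / 2 = 2 * b by omega] at hA hB
    simp only [Set.singleton_subset_iff, Set.insert_subset_iff, Set.mem_insert_iff,
      Set.mem_singleton_iff] at hA hB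
    exact absurd (show (2 : ZMod n) = 0 by push_cast at hA; linear_combination hA.2 - hA.1) h2z
  · obtain ⟨a, rfl⟩ : ∃ a, v = 4 * a + 1 := ⟨v / 4, by omega⟩
    obtain ⟨b, rfl⟩ : ∃ b, w = 4 * b + 1 := ⟨w / 4, by omega⟩
    rw [gpair_eq1 (by omega), gpair_eq1 (by omega),
      show (4 * a + 1) / 2 = 2 * a by omega, show (4 * b + 1) / 2 = 2 * b by omega] at hA hB
    simp only [Set.singleton_subset_iff, Set.insert_subset_iff, Set.mem_insert_iff,
      Set.mem_singleton_iff] at hA hB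
    have h' : ((2 * a : ℕ) : ZMod n) = ((2 * b : ℕ) : ZMod n) := by
      push_cast at hB ⊢; linear_combination hB
    exact Or.inl (modeq_eq_of_lt ((pipe hodd h').add_right 1) hv hw)
  · obtain ⟨a, rfl⟩ : ∃ a, v = 4 * a + 1 := ⟨v / 4, by omega⟩
    obtain ⟨b, rfl⟩ : ∃ b, w = 4 * b + 2 := ⟨w / 4, by omega⟩
    rw [gpair_eq1 (by omega), gpair_eq2 (by omega),
      show (4 * a + 1) / 2 = 2 * a by omega, show (4 * b + 2) / 2 = 2 * b + 1 by omega] at hA hB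
    simp only [Set.singleton_subset_iff, Set.insert_subset_iff, Set.mem_insert_iff,
      Set.mem_singleton_iff] at hA hB
    exact absurd (show (2 : ZMod n) = 0 by push_cast at hA; linear_combination hA.2 - hA.1) h2z
  · obtain ⟨a, rfl⟩ : ∃ a, v = 4 * a + 1 := ⟨v / 4, by omega⟩
    obtain ⟨b, rfl⟩ : ∃ b, w = 4 * b + 3 := ⟨w / 4, by omega⟩
    rw [gpair_eq1 (by omega), gpair_eq3 (by omega),
      show (4 * a + 1) / 2 = 2 * a by omega, show (4 * b + 3) / 2 = 2 * b + 1 by omega] at hA hB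
    simp only [Set.singleton_subset_iff, Set.insert_subset_iff, Set.mem_insert_iff,
      Set.mem_singleton_iff] at hA hB
    exact absurd (show (2 : ZMod n) = 0 by push_cast at hA; linear_combination hA.2 - hA.1) h2z
  -- case (2, *)
  · obtain ⟨a, rfl⟩ : ∃ a, v = 4 * a + 2 := ⟨v / 4, by omega⟩
    obtain ⟨b, rfl⟩ : ∃ b, w = 4 * b + 0 := ⟨w / 4, by omega⟩
    rw [gpair_eq2 (by omega), gpair_eq0 (by omega),
      show (4 * a + 2) / 2 = 2 * a + 1 by omega, show (4 * b + 0) / 2 = 2 * b by omega] at hA hB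
    simp only [Set.singleton_subset_iff, Set.insert_subset_iff, Set.mem_insert_iff,
      Set.mem_singleton_iff] at hA hB
    exact absurd (show (2 : ZMod n) = 0 by push_cast at hA hB; linear_combination hA - hB) h2z
  · obtain ⟨a, rfl⟩ : ∃ a, v = 4 * a + 2 := ⟨v / 4, by omega⟩
    obtain ⟨b, rfl⟩ : ∃ b, w = 4 * b + 1 := ⟨w / 4, by omega⟩
    rw [gpair_eq2 (by omega), gpair_eq1 (by omega),
      show (4 * a + 2) / 2 = 2 * a + 1 by omega, show (4 * b + 1) / 2 = 2 * b by omega] at hA hB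
    simp only [Set.singleton_subset_iff, Set.insert_subset_iff, Set.mem_insert_iff,
      Set.mem_singleton_iff] at hA hB
    have h' : ((2 * a : ℕ) : ZMod n) = ((2 * b : ℕ) : ZMod n) := by
      push_cast at hB ⊢; linear_combination hB
    refine Or.inr ⟨by omega, Or.inr ?_⟩
    have e : 4 * b + 1 + 1 = 4 * b + 2 := by ring
    rw [e]
    exact ((pipe hodd h').add_right 2).symm
  · obtain ⟨a, rfl⟩ : ∃ a, v = 4 * a + 2 := ⟨v / 4, by omega⟩
    obtain ⟨b, rfl⟩ : ∃ b, w = 4 * b + 2 := ⟨w / 4, by omega⟩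
    rw [gpair_eq2 (by omega), gpair_eq2 (by omega),
      show (4 * a + 2) / 2 = 2 * a + 1 by omega, show (4 * b + 2) / 2 = 2 * b + 1 by omega] at hA hB
    simp only [Set.singleton_subset_iff, Set.insert_subset_iff, Set.mem_insert_iff,
      Set.mem_singleton_iff] at hA hB
    have h' : ((2 * a + 1 : ℕ) : ZMod n) = ((2 * b + 1 : ℕ) : ZMod n) := by
      push_cast at hA ⊢; linear_combination hA
    exact Or.inl (modeq_eq_of_lt ((pipe' hodd h').add_right 2) hv hw)
  · obtain ⟨a, rfl⟩ : ∃ a, v = 4 * a + 2 := ⟨v / 4, by omega⟩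
    obtain ⟨b, rfl⟩ : ∃ b, w = 4 * b + 3 := ⟨w / 4, by omega⟩
    rw [gpair_eq2 (by omega), gpair_eq3 (by omega),
      show (4 * a + 2) / 2 = 2 * a + 1 by omega, show (4 * b + 3) / 2 = 2 * b + 1 by omega] at hA hB
    simp only [Set.singleton_subset_iff, Set.insert_subset_iff, Set.mem_insert_iff,
      Set.mem_singleton_iff] at hA hB
    have h' : ((2 * a + 1 : ℕ) : ZMod n) = ((2 * b + 1 : ℕ) : ZMod n) := by
      push_cast at hA ⊢; linear_combination hA
    exact Or.inr ⟨by omega, Or.inl ((pipe' hodd h').add_right 3).symm⟩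
  -- case (3, *)
  · obtain ⟨a, rfl⟩ : ∃ a, v = 4 * a + 3 := ⟨v / 4, by omega⟩
    obtain ⟨b, rfl⟩ : ∃ b, w = 4 * b + 0 := ⟨w / 4, by omega⟩
    rw [gpair_eq3 (by omega), gpair_eq0 (by omega),
      show (4 * a + 3) / 2 = 2 * a + 1 by omega, show (4 * b + 0) / 2 = 2 * b by omega] at hA hB
    simp only [Set.singleton_subset_iff, Set.insert_subset_iff, Set.mem_insert_iff,
      Set.mem_singleton_iff] at hA hB
    exact absurd (show (2 : ZMod n) = 0 by push_cast at hB; linear_combination hB.2 - hB.1) h2z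
  · obtain ⟨a, rfl⟩ : ∃ a, v = 4 * a + 3 := ⟨v / 4, by omega⟩
    obtain ⟨b, rfl⟩ : ∃ b, w = 4 * b + 1 := ⟨w / 4, by omega⟩
    rw [gpair_eq3 (by omega), gpair_eq1 (by omega),
      show (4 * a + 3) / 2 = 2 * a + 1 by omega, show (4 * b + 1) / 2 = 2 * b by omega] at hA hB
    simp only [Set.singleton_subset_iff, Set.insert_subset_iff, Set.mem_insert_iff,
      Set.mem_singleton_iff] at hA hB
    exact absurd (show (2 : ZMod n) = 0 by push_cast at hB; linear_combination hB.2 - hB.1) h2z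
  · obtain ⟨a, rfl⟩ : ∃ a, v = 4 * a + 3 := ⟨v / 4, by omega⟩
    obtain ⟨b, rfl⟩ : ∃ b, w = 4 * b + 2 := ⟨w / 4, by omega⟩
    rw [gpair_eq3 (by omega), gpair_eq2 (by omega),
      show (4 * a + 3) / 2 = 2 * a + 1 by omega, show (4 * b + 2) / 2 = 2 * b + 1 by omega] at hA hB
    simp only [Set.singleton_subset_iff, Set.insert_subset_iff, Set.mem_insert_iff,
      Set.mem_singleton_iff] at hA hB
    exact absurd (show (2 : ZMod n) = 0 by push_cast at hB; linear_combination hB.2 - hB.1) h2z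
  · obtain ⟨a, rfl⟩ : ∃ a, v = 4 * a + 3 := ⟨v / 4, by omega⟩
    obtain ⟨b, rfl⟩ : ∃ b, w = 4 * b + 3 := ⟨w / 4, by omega⟩
    rw [gpair_eq3 (by omega), gpair_eq3 (by omega),
      show (4 * a + 3) / 2 = 2 * a + 1 by omega, show (4 * b + 3) / 2 = 2 * b + 1 by omega] at hA hB
    simp only [Set.singleton_subset_iff, Set.insert_subset_iff, Set.mem_insert_iff,
      Set.mem_singleton_iff] at hA hB
    have h' : ((2 * a + 1 : ℕ) : ZMod n) = ((2 * b + 1 : ℕ) : ZMod n) := by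
      push_cast at hA ⊢; linear_combination hA
    exact Or.inl (modeq_eq_of_lt ((pipe' hodd h').add_right 3) hv hw)

end CrownIsoAux
namespace CrownIsoAux

variable {n : ℕ}

lemma g_mono [NeZero n] (hodd : Odd n) (h3 : 3 ≤ n) : Monotone (g (n := n) h3) := by
  intro x y h
  rcases (crown_le_iff x y).mp h with rfl | ⟨heven, hy⟩
  · exact le_refl _
  haveI : Fact (1 < 4 * n) := ⟨by omega⟩
  have hv : x.val < 4 * n := ZMod.val_lt x
  have he : x.val % 2 = 0 := Nat.even_iff.mp heven
  rw [homPt_le_iff]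
  show (gpair n x.val).1 ⊆ (gpair n y.val).1 ∧ (gpair n x.val).2 ⊆ (gpair n y.val).2
  rcases hy with rfl | rfl
  · -- y = x + 1
    have hw : (x + 1).val = x.val + 1 := by
      rw [ZMod.val_add, ZMod.val_one, Nat.mod_eq_of_lt (by omega)]
    rw [hw]
    rcases (show x.val % 4 = 0 ∨ x.val % 4 = 2 by omega) with hv4 | hv4
    · rw [gpair_eq0 hv4, gpair_eq1 (by omega), show (x.val + 1) / 2 = x.val / 2 by omega]
      exact ⟨by simp, by simp⟩
    · rw [gpair_eq2 hv4, gpair_eq3 (by omega), show (x.val + 1) / 2 = x.val / 2 by omega]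
      exact ⟨by simp, by simp⟩
  · -- y = x - 1
    have hxy : (x - 1) + 1 = x := by ring
    have hval : x.val = ((x - 1).val + 1) % (4 * n) := by
      conv_lhs => rw [← hxy]
      rw [ZMod.val_add, ZMod.val_one]
    have hw' : (x - 1).val < 4 * n := ZMod.val_lt _
    by_cases hcase : (x - 1).val = 4 * n - 1
    · rw [hcase] at hval
      rw [show 4 * n - 1 + 1 = 4 * n by omega, Nat.mod_self] at hval
      rw [hval, hcase]
      have e1 : ((2 * n - 1 : ℕ) : ZMod n) = -1 := by
        have h0 : ((2 * n : ℕ) : ZMod n) = 0 := by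
          rw [Nat.cast_mul, ZMod.natCast_self, mul_zero]
        have : ((2 * n - 1 : ℕ) : ZMod n) + 1 = 0 := by
          rw [← Nat.cast_add_one, show 2 * n - 1 + 1 = 2 * n by omega, h0]
        linear_combination this
      rw [gpair_eq0 (by omega), gpair_eq3 (by omega),
        show (4 * n - 1) / 2 = 2 * n - 1 by omega, e1, show (0 : ℕ) / 2 = 0 by norm_num]
      constructor
      · simp only [Set.singleton_subset_iff, Set.mem_singleton_iff]
        push_cast
        ring
      · simp only [Set.singleton_subset_iff, Set.mem_insert_iff, Set.mem_singleton_iff]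
        right
        push_cast
        ring
    · have hvw : x.val = (x - 1).val + 1 := by
        rw [hval, Nat.mod_eq_of_lt (by omega)]
      rcases (show x.val % 4 = 0 ∨ x.val % 4 = 2 by omega) with hv4 | hv4
      · have e : ((x.val / 2 - 1 : ℕ) : ZMod n) + 1 = ((x.val / 2 : ℕ) : ZMod n) := by
          rw [← Nat.cast_add_one, show x.val / 2 - 1 + 1 = x.val / 2 by omega]
        rw [gpair_eq0 hv4, gpair_eq3 (by omega),
          show (x - 1).val / 2 = x.val / 2 - 1 by omega]
        constructor
        · simp only [Set.singleton_subset_iff, Set.mem_singleton_iff]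
          linear_combination -e
        · simp only [Set.singleton_subset_iff, Set.mem_insert_iff, Set.mem_singleton_iff]
          right
          linear_combination -e
      · have e : ((x.val / 2 - 1 : ℕ) : ZMod n) + 1 = ((x.val / 2 : ℕ) : ZMod n) := by
          rw [← Nat.cast_add_one, show x.val / 2 - 1 + 1 = x.val / 2 by omega]
        rw [gpair_eq2 hv4, gpair_eq1 (by omega),
          show (x - 1).val / 2 = x.val / 2 - 1 by omega]
        constructor
        · simp only [Set.singleton_subset_iff, Set.mem_insert_iff, Set.mem_singleton_iff]
          right
          linear_combination -e
        · simp only [Set.singleton_subset_iff, Set.mem_singleton_iff]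
          linear_combination -e

lemma g_le_rev [NeZero n] (hodd : Odd n) (h3 : 3 ≤ n) {x y : Crown n}
    (h : g h3 x ≤ g h3 y) : x ≤ y := by
  obtain ⟨hA, hB⟩ := (homPt_le_iff _ _ _).mp h
  rw [crown_le_iff]
  rcases gpair_le_modEq hodd h3 (ZMod.val_lt x) (ZMod.val_lt y) hA hB with
    he | ⟨hev, hc | hc⟩
  · exact Or.inl (ZMod.val_injective _ he)
  · exact Or.inr ⟨Nat.even_iff.mpr hev, Or.inl (crown_succ hc)⟩
  · exact Or.inr ⟨Nat.even_iff.mpr hev, Or.inr (crown_pred hc)⟩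

lemma half_even [NeZero n] (hodd : Odd n) (a : ZMod n) :
    ∃ k, k < n ∧ ((2 * k : ℕ) : ZMod n) = a := by
  have hlt : a.val < n := ZMod.val_lt a
  have hnpos : 0 < n := Nat.pos_of_ne_zero (NeZero.ne n)
  rcases Nat.even_or_odd a.val with he | ho
  · obtain ⟨t, ht⟩ := he
    refine ⟨a.val / 2, by omega, ?_⟩
    rw [show 2 * (a.val / 2) = a.val by omega]
    exact ZMod.natCast_zmod_val a
  · obtain ⟨m, hm⟩ := hodd
    obtain ⟨t, ht⟩ := ho
    refine ⟨(a.val + n) / 2, by omega, ?_⟩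
    rw [show 2 * ((a.val + n) / 2) = a.val + n by omega, Nat.cast_add, ZMod.natCast_self,
      add_zero, ZMod.natCast_zmod_val]

lemma half_odd [NeZero n] (hodd : Odd n) (a : ZMod n) :
    ∃ k, k < n ∧ ((2 * k + 1 : ℕ) : ZMod n) = a := by
  obtain ⟨k, hk, he⟩ := half_even hodd (a - 1)
  refine ⟨k, hk, ?_⟩
  rw [Nat.cast_add, Nat.cast_one, he]
  ring

lemma g_surj [NeZero n] (hodd : Odd n) (h3 : 3 ≤ n) :
    Function.Surjective (g (n := n) h3) := by
  have hnpos : 0 < n := Nat.pos_of_ne_zero (NeZero.ne n)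
  intro X
  rcases classify hodd h3 X with ⟨a, ha⟩ | ⟨a, ha⟩ | ⟨a, ha⟩ | ⟨a, ha⟩
  · obtain ⟨k, hk, he⟩ := half_even hodd a
    refine ⟨((4 * k : ℕ) : Crown n), Subtype.ext ?_⟩
    rw [ha]
    show gpair n (((4 * k : ℕ) : Crown n)).val = _
    rw [ZMod.val_cast_of_lt (by omega), gpair_eq0 (by omega),
      show (4 * k) / 2 = 2 * k by omega, he]
  · obtain ⟨k, hk, he⟩ := half_odd hodd a
    refine ⟨((4 * k + 2 : ℕ) : Crown n), Subtype.ext ?_⟩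
    rw [ha]
    show gpair n (((4 * k + 2 : ℕ) : Crown n)).val = _
    rw [ZMod.val_cast_of_lt (by omega), gpair_eq2 (by omega),
      show (4 * k + 2) / 2 = 2 * k + 1 by omega, he]
  · obtain ⟨k, hk, he⟩ := half_even hodd a
    refine ⟨((4 * k + 1 : ℕ) : Crown n), Subtype.ext ?_⟩
    rw [ha]
    show gpair n (((4 * k + 1 : ℕ) : Crown n)).val = _
    rw [ZMod.val_cast_of_lt (by omega), gpair_eq1 (by omega),
      show (4 * k + 1) / 2 = 2 * k by omega, he]
  · obtain ⟨k, hk, he⟩ := half_odd hodd a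
    refine ⟨((4 * k + 3 : ℕ) : Crown n), Subtype.ext ?_⟩
    rw [ha]
    show gpair n (((4 * k + 3 : ℕ) : Crown n)).val = _
    rw [ZMod.val_cast_of_lt (by omega), gpair_eq3 (by omega),
      show (4 * k + 3) / 2 = 2 * k + 1 by omega, he]

lemma g_nu [NeZero n] (hodd : Odd n) (h3 : 3 ≤ n) (x : Crown n) :
    nuH (cyc n) (g h3 x) = g h3 (x + ((2 * n : ℕ) : Crown n)) := by
  apply Subtype.ext
  obtain ⟨m, hm⟩ := hodd
  have hnpos : 0 < n := by omega
  have hv : x.val < 4 * n := ZMod.val_lt x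
  have hw : (x + ((2 * n : ℕ) : Crown n)).val = (x.val + 2 * n) % (4 * n) := by
    rw [ZMod.val_add, ZMod.val_natCast, Nat.mod_eq_of_lt (show 2 * n < 4 * n by omega)]
  show ((gpair n x.val).2, (gpair n x.val).1) = gpair n ((x + ((2 * n : ℕ) : Crown n)).val)
  rw [hw]
  by_cases hlt : x.val + 2 * n < 4 * n
  · rw [Nat.mod_eq_of_lt hlt]
    have e : ((x.val / 2 + n : ℕ) : ZMod n) = ((x.val / 2 : ℕ) : ZMod n) := by
      rw [Nat.cast_add, ZMod.natCast_self, add_zero]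
    rcases (show x.val % 4 = 0 ∨ x.val % 4 = 1 ∨ x.val % 4 = 2 ∨ x.val % 4 = 3 by omega)
      with hv4 | hv4 | hv4 | hv4
    · rw [gpair_eq0 hv4, gpair_eq2 (by omega),
        show (x.val + 2 * n) / 2 = x.val / 2 + n by omega, e]
    · rw [gpair_eq1 hv4, gpair_eq3 (by omega),
        show (x.val + 2 * n) / 2 = x.val / 2 + n by omega, e]
    · rw [gpair_eq2 hv4, gpair_eq0 (by omega),
        show (x.val + 2 * n) / 2 = x.val / 2 + n by omega, e]
    · rw [gpair_eq3 hv4, gpair_eq1 (by omega),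
        show (x.val + 2 * n) / 2 = x.val / 2 + n by omega, e]
  · rw [Nat.mod_eq_sub_mod (by omega), Nat.mod_eq_of_lt (by omega)]
    have e : ((x.val + 2 * n - 4 * n) / 2 : ℕ) = x.val / 2 - n := by omega
    have e2 : ((x.val / 2 - n : ℕ) : ZMod n) = ((x.val / 2 : ℕ) : ZMod n) := by
      conv_rhs => rw [show x.val / 2 = x.val / 2 - n + n by omega]
      rw [Nat.cast_add, ZMod.natCast_self, add_zero]
    rcases (show x.val % 4 = 0 ∨ x.val % 4 = 1 ∨ x.val % 4 = 2 ∨ x.val % 4 = 3 by omega)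
      with hv4 | hv4 | hv4 | hv4
    · rw [gpair_eq0 hv4, gpair_eq2 (by omega), e, e2]
    · rw [gpair_eq1 hv4, gpair_eq3 (by omega), e, e2]
    · rw [gpair_eq2 hv4, gpair_eq0 (by omega), e, e2]
    · rw [gpair_eq3 hv4, gpair_eq1 (by omega), e, e2]

end CrownIsoAux
/-- For odd `n ≥ 3`, `(𝓗(C_n), ν)` is a `Z₂`-poset, order-isomorphic to
the `Z₂`-crown of order `n` by an isomorphism commuting with the involutions. -/
theorem homPoset_cycle_iso_crown (n : ℕ) [NeZero n] (hodd : Odd n) (h3 : 3 ≤ n) :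
    Monotone (nuH (cyc n)) ∧
    (∀ X : HomPt (cyc n), nuH (cyc n) (nuH (cyc n) X) = X) ∧
    (∀ X : HomPt (cyc n), nuH (cyc n) X ≠ X) ∧
    ∃ e : HomPt (cyc n) ≃o Crown n,
      ∀ X : HomPt (cyc n), e (nuH (cyc n) X) = e X + ((2 * n : ℕ) : Crown n) := by
  open CrownIsoAux in
  refine ⟨?_, ?_, ?_, ?_⟩
  · intro X Y h
    obtain ⟨h1, h2⟩ := (homPt_le_iff _ _ _).mp h
    exact (homPt_le_iff _ _ _).mpr ⟨h2, h1⟩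
  · intro X
    exact Subtype.ext rfl
  · intro X hX
    have h1 : X.val.2 = X.val.1 := congrArg (fun Z => Z.val.1) hX
    obtain ⟨a, ha⟩ := X.prop.1
    have ha2 : a ∈ X.val.2 := by rw [h1]; exact ha
    exact (cyc n).loopless.irrefl a (X.prop.2.2 a ha a ha2)
  · have hbij : Function.Bijective (g (n := n) h3) :=
      ⟨fun u v huv => le_antisymm (g_le_rev hodd h3 (le_of_eq huv))
          (g_le_rev hodd h3 (le_of_eq huv.symm)),
        g_surj hodd h3⟩
    let e0 : Crown n ≃o HomPt (cyc n) :=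
      { toEquiv := Equiv.ofBijective _ hbij
        map_rel_iff' := @fun u v =>
          ⟨fun h => g_le_rev hodd h3 h, fun h => g_mono hodd h3 h⟩ }
    refine ⟨e0.symm, fun X => ?_⟩
    have h1 : nuH (cyc n) X = e0 (e0.symm X + ((2 * n : ℕ) : Crown n)) := by
      conv_lhs => rw [← e0.apply_symm_apply X]
      exact g_nu hodd h3 (e0.symm X)
    rw [h1, e0.symm_apply_apply]
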